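/- Uniqueness up to homotopy of two-sided fillers: let π : Ũ ⟶ U be a universal map with a full Id-type structure. Suppose E₀ ↠ B and E₁ ↠ B are π-fibrant, X ⟶ E₀ and X ⟶ E₁ are maps over B each having the left lifting property against π, and J : E₀ ⟶ E₁ is a map under X and over B. Then there exist maps s, r : E₁ ⟶ E₀ under X and over B together with Id-homotopies over B from J∘s to id_{E₁} constant along X ⟶ E₁, and from r∘J (using r = s) to id_{E₀} constant along X ⟶ E₀. -/

import Mathlib

open CategoryTheory CategoryTheory.Limits

/-- A map is a `π`-fibration if it arises as a pullback of the universal map `π`. -/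
def IsPiFib {C : Type*} [Category C] {Ut U : C} (π : Ut ⟶ U) {E B : C} (p : E ⟶ B) : Prop :=
  ∃ (c : B ⟶ U) (t : E ⟶ Ut), IsPullback t p π c

/-- uniqueness up to homotopy of two-sided fillers: let `π` have a full
Id-type structure.  Suppose `E₀ ↠ B`, `E₁ ↠ B` are `π`-fibrant, `u₀ : X ⟶ E₀` and
`u₁ : X ⟶ E₁` are maps over `B` each having the left lifting property against
`π`-fibrations, and `J : E₀ ⟶ E₁` is a map under `X` and over `B`.  Then there are maps
`s, r : E₁ ⟶ E₀` under `X` and over `B` together with Id-homotopies over `B` from `J∘s`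
to `id_{E₁}` constant along `u₁`, and from `r∘J` to `id_{E₀}` constant along `u₀`. -/
theorem filler_unique_up_to_homotopy {C : Type*} [Category C] [HasFiniteLimits C]
    {Ut U : C} (π : Ut ⟶ U)
    {B X E₀ E₁ : C} (p₀ : E₀ ⟶ B) (p₁ : E₁ ⟶ B)
    (h₀ : IsPiFib π p₀) (h₁ : IsPiFib π p₁)
    (u₀ : X ⟶ E₀) (u₁ : X ⟶ E₁) (hu : u₀ ≫ p₀ = u₁ ≫ p₁)
    (hu₀LLP : ∀ {P Q : C} (w : P ⟶ Q), IsPiFib π w →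
      ∀ (top : X ⟶ P) (bot : E₀ ⟶ Q), top ≫ w = u₀ ≫ bot →
        ∃ l : E₀ ⟶ P, u₀ ≫ l = top ∧ l ≫ w = bot)
    (hu₁LLP : ∀ {P Q : C} (w : P ⟶ Q), IsPiFib π w →
      ∀ (top : X ⟶ P) (bot : E₁ ⟶ Q), top ≫ w = u₁ ≫ bot →
        ∃ l : E₁ ⟶ P, u₁ ≫ l = top ∧ l ≫ w = bot)
    (J : E₀ ⟶ E₁) (hJu : u₀ ≫ J = u₁) (hJp : J ≫ p₁ = p₀)
    -- Id-type data for E₀ over B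
    (idE₀ : C) (refl₀ : E₀ ⟶ idE₀) (evb₀ : idE₀ ⟶ pullback p₀ p₀)
    (hfact₀ : refl₀ ≫ evb₀ = pullback.lift (𝟙 E₀) (𝟙 E₀) rfl)
    (hevb₀ : IsPiFib π evb₀)
    -- Id-type data for E₁ over B
    (idE₁ : C) (refl₁ : E₁ ⟶ idE₁) (evb₁ : idE₁ ⟶ pullback p₁ p₁)
    (hfact₁ : refl₁ ≫ evb₁ = pullback.lift (𝟙 E₁) (𝟙 E₁) rfl)
    (hevb₁ : IsPiFib π evb₁) :
    ∃ (s r : E₁ ⟶ E₀) (hs : s ≫ p₀ = p₁) (hr : r ≫ p₀ = p₁)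
      (_ : u₁ ≫ s = u₀) (_ : u₁ ≫ r = u₀)
      (Hs : E₁ ⟶ idE₁) (Hr : E₀ ⟶ idE₀),
      Hs ≫ evb₁ = pullback.lift (s ≫ J) (𝟙 E₁)
        (by rw [Category.assoc, hJp, hs, Category.id_comp]) ∧
      u₁ ≫ Hs = u₁ ≫ refl₁ ∧
      Hr ≫ evb₀ = pullback.lift (J ≫ r) (𝟙 E₀)
        (by rw [Category.assoc, hr, hJp, Category.id_comp]) ∧
      u₀ ≫ Hr = u₀ ≫ refl₀ := by
  obtain ⟨s, hsu, hsp⟩ := hu₁LLP p₀ h₀ u₀ p₁ hu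
  have hHs : (u₁ ≫ refl₁) ≫ evb₁ = u₁ ≫ pullback.lift (s ≫ J) (𝟙 E₁)
      (by rw [Category.assoc, hJp, hsp, Category.id_comp]) := by
    rw [Category.assoc, hfact₁]
    apply pullback.hom_ext
    · simp only [Category.assoc]; erw [pullback.lift_fst, pullback.lift_fst]
      simp [reassoc_of% hsu, hJu]
    · simp only [Category.assoc]; erw [pullback.lift_snd, pullback.lift_snd]
  obtain ⟨Hs, hHsu, hHsev⟩ := hu₁LLP evb₁ hevb₁ (u₁ ≫ refl₁) _ hHs
  have hHr : (u₀ ≫ refl₀) ≫ evb₀ = u₀ ≫ pullback.lift (J ≫ s) (𝟙 E₀)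
      (by rw [Category.assoc, hsp, hJp, Category.id_comp]) := by
    rw [Category.assoc, hfact₀]
    apply pullback.hom_ext
    · simp only [Category.assoc]; erw [pullback.lift_fst, pullback.lift_fst]
      simp [reassoc_of% hJu, hsu]
    · simp only [Category.assoc]; erw [pullback.lift_snd, pullback.lift_snd]
  obtain ⟨Hr, hHru, hHrev⟩ := hu₀LLP evb₀ hevb₀ (u₀ ≫ refl₀) _ hHr
  exact ⟨s, s, hsp, hsp, hsu, hsu, Hs, Hr, hHsev, hHsu, hHrev, hHru⟩
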